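/- Let U be the positive radial ground state solution of -ΔU + U - U^p = 0 on ℝ^N, which satisfies U(x) ≤ C e^{-|x|}|x|^{(1-N)/2} for large |x|. Fix σ > 0 and points a_j = 2jσ on the x₁-axis for j ∈ ℤ \ {0}. Then there exists C (independent of σ) such that for every x with |x₁| ≤ σ, Σ_{j ∈ ℤ, j ≠ 0} U(x₁ - 2jσ, x') ≤ C e^{-2σ} σ^{(1-N)/2} e^{|x|}. -/

import Mathlib

open Real
open scoped RealInnerProductSpace

/-- Unit vector along the first coordinate axis of `ℝ^N`. -/
noncomputable def e1 (N : ℕ) : EuclideanSpace ℝ (Fin N) :=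
  if h : 0 < N then EuclideanSpace.single (⟨0, h⟩ : Fin N) (1 : ℝ) else 0

/-- Any finite sum of `q^(natAbs j - 1)` over distinct nonzero integers is at
most `2 * (1-q)⁻¹` for `q = exp (-2)`. -/
lemma aux_geom_sum (s : Finset {j : ℤ // j ≠ 0}) :
    ∑ j ∈ s, Real.exp (-2) ^ (j.1.natAbs - 1) ≤ 2 * (1 - Real.exp (-2))⁻¹ := by
  set q : ℝ := Real.exp (-2) with hq
  have hq0 : 0 ≤ q := (Real.exp_pos _).le
  have hq1 : q < 1 := Real.exp_lt_one_iff.mpr (by norm_num)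
  have hsum : Summable (fun n : ℕ => q ^ n) := summable_geometric_of_lt_one hq0 hq1
  have htsum : ∑' n : ℕ, q ^ n = (1 - q)⁻¹ := tsum_geometric_of_lt_one hq0 hq1
  have key : ∀ t : Finset {j : ℤ // j ≠ 0},
      (∀ a ∈ t, ∀ b ∈ t, a.1.natAbs - 1 = b.1.natAbs - 1 → a = b) →
      ∑ j ∈ t, q ^ (j.1.natAbs - 1) ≤ (1 - q)⁻¹ := by
    intro t ht
    calc ∑ j ∈ t, q ^ (j.1.natAbs - 1)
        = ∑ n ∈ t.image (fun j => j.1.natAbs - 1), q ^ n := (Finset.sum_image ht).symm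
      _ ≤ ∑' n : ℕ, q ^ n := Summable.sum_le_tsum _ (fun n _ => pow_nonneg hq0 n) hsum
      _ = (1 - q)⁻¹ := htsum
  rw [← Finset.sum_filter_add_sum_filter_not s (fun j => 0 < j.1)]
  have h1 : ∑ j ∈ s.filter (fun j => 0 < j.1), q ^ (j.1.natAbs - 1) ≤ (1 - q)⁻¹ := by
    refine key _ ?_
    intro a ha b hb hab
    rw [Finset.mem_filter] at ha hb
    have ha0 := a.2; have hb0 := b.2
    ext
    omega
  have h2 : ∑ j ∈ s.filter (fun j => ¬ 0 < j.1), q ^ (j.1.natAbs - 1) ≤ (1 - q)⁻¹ := by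
    refine key _ ?_
    intro a ha b hb hab
    rw [Finset.mem_filter] at ha hb
    have ha0 := a.2; have hb0 := b.2
    ext
    omega
  linarith

/-- Sum of exponentially decaying bumps centered at the lattice points `(2jσ, 0)`,
`j ∈ ℤ \ {0}`, evaluated in the central cell `|x₁| ≤ σ`, is bounded by
`C e^{-2σ} σ^{(1-N)/2} e^{|x|}`, with `C` independent of `σ`. -/
theorem stmt8 (N : ℕ) (hN : 2 ≤ N)
    (U : EuclideanSpace ℝ (Fin N) → ℝ) (hU0 : ∀ x, 0 ≤ U x)
    (C₀ A : ℝ) (hC₀ : 0 < C₀) (hA : 1 ≤ A)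
    (hUb : ∀ x : EuclideanSpace ℝ (Fin N), A ≤ ‖x‖ →
      U x ≤ C₀ * Real.exp (-‖x‖) * ‖x‖ ^ (((1 : ℝ) - N) / 2)) :
    ∃ C > 0, ∀ σ : ℝ, 1 ≤ σ → A ≤ σ →
      ∀ x : EuclideanSpace ℝ (Fin N), |x (⟨0, by omega⟩ : Fin N)| ≤ σ →
        (∑' j : {j : ℤ // j ≠ 0}, U (x - (2 * ((j : ℤ) : ℝ) * σ) • e1 N))
          ≤ C * Real.exp (-2 * σ) * σ ^ (((1 : ℝ) - N) / 2) * Real.exp ‖x‖ := by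
  have hN0 : 0 < N := by omega
  have hq1 : Real.exp (-2) < 1 := Real.exp_lt_one_iff.mpr (by norm_num)
  have hq0 : (0:ℝ) < 1 - Real.exp (-2) := by linarith
  refine ⟨C₀ * (2 * (1 - Real.exp (-2))⁻¹), by positivity, ?_⟩
  intro σ hσ1 hσA x hx1
  have hσ0 : (0:ℝ) < σ := lt_of_lt_of_le one_pos hσ1
  set ee : ℝ := ((1 : ℝ) - N) / 2 with hee
  have hee0 : ee ≤ 0 := by
    rw [hee]
    have : (2:ℝ) ≤ (N:ℝ) := by exact_mod_cast hN
    linarith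
  have he1 : ‖e1 N‖ = 1 := by
    rw [e1, dif_pos hN0, EuclideanSpace.norm_single, norm_one]
  -- per-term bound
  have hterm : ∀ j : {j : ℤ // j ≠ 0},
      U (x - (2 * ((j : ℤ) : ℝ) * σ) • e1 N)
        ≤ (C₀ * Real.exp ‖x‖ * Real.exp (-2 * σ) * σ ^ ee)
          * Real.exp (-2) ^ (j.1.natAbs - 1) := by
    intro j
    set c : ℝ := 2 * ((j : ℤ) : ℝ) * σ with hc
    set y : EuclideanSpace ℝ (Fin N) := x - c • e1 N with hy
    set n : ℕ := j.1.natAbs with hn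
    have hn1 : 1 ≤ n := by have := j.2; omega
    have habsj : |((j : ℤ) : ℝ)| = (n : ℝ) := by
      rw [← Int.cast_abs, Int.abs_eq_natAbs, Int.cast_natCast]
    have habsc : |c| = 2 * (n : ℝ) * σ := by
      rw [hc, abs_mul, abs_mul, abs_two, habsj, abs_of_pos hσ0]
    have hnormsmul : ‖c • e1 N‖ = 2 * (n : ℝ) * σ := by
      rw [norm_smul, he1, mul_one, Real.norm_eq_abs, habsc]
    -- coordinate lower bound for ‖y‖
    have hinner : (inner ℝ y (e1 N) : ℝ) = x (⟨0, hN0⟩ : Fin N) - c := by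
      rw [hy, inner_sub_left, real_inner_smul_left]
      have h1 : (inner ℝ x (e1 N) : ℝ) = x (⟨0, hN0⟩ : Fin N) := by
        rw [e1, dif_pos hN0, EuclideanSpace.inner_single_right]
        simp
      have h2 : (inner ℝ (e1 N) (e1 N) : ℝ) = 1 := by
        rw [real_inner_self_eq_norm_sq, he1, one_pow]
      rw [h1, h2, mul_one]
    have hcoord : |x (⟨0, hN0⟩ : Fin N) - c| ≤ ‖y‖ := by
      have := abs_real_inner_le_norm y (e1 N)
      rw [he1, mul_one, hinner] at this
      exact this
    have hx1' : |x (⟨0, hN0⟩ : Fin N)| ≤ σ := hx1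
    have hny : σ ≤ ‖y‖ := by
      have h1 : |c| - |x (⟨0, hN0⟩ : Fin N)| ≤ |x (⟨0, hN0⟩ : Fin N) - c| := by
        have := abs_sub_abs_le_abs_sub c (x (⟨0, hN0⟩ : Fin N))
        rw [abs_sub_comm] at this
        linarith [abs_sub_comm c (x (⟨0, hN0⟩ : Fin N))]
      have h2 : (2 : ℝ) * (n : ℝ) * σ - σ ≤ ‖y‖ := by
        rw [← habsc]
        linarith [hcoord, h1, hx1']
      have h3 : (1 : ℝ) ≤ (n : ℝ) := by exact_mod_cast hn1
      nlinarith
    have hAy : A ≤ ‖y‖ := le_trans hσA hny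
    have hy0 : (0:ℝ) < ‖y‖ := lt_of_lt_of_le hσ0 hny
    -- triangle lower bound
    have htri : 2 * (n : ℝ) * σ - ‖x‖ ≤ ‖y‖ := by
      have := norm_sub_norm_le (c • e1 N) x
      rw [hnormsmul] at this
      have h4 : ‖c • e1 N - x‖ = ‖y‖ := by rw [hy, norm_sub_rev]
      linarith [this, h4.symm.le, h4.le]
    -- combine
    have hUby := hUb y hAy
    have hexp : Real.exp (-‖y‖) ≤ Real.exp ‖x‖ * Real.exp (-2 * σ)
        * Real.exp (-2) ^ (n - 1) := by
      have h5 : Real.exp (-‖y‖) ≤ Real.exp (‖x‖ - 2 * (n : ℝ) * σ) :=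
        Real.exp_le_exp.mpr (by linarith)
      have h6 : Real.exp (‖x‖ - 2 * (n : ℝ) * σ)
          = Real.exp ‖x‖ * Real.exp (-2 * σ) * Real.exp (-(2 * σ)) ^ (n - 1) := by
        rw [← Real.exp_nat_mul, ← Real.exp_add, ← Real.exp_add]
        congr 1
        have : ((n - 1 : ℕ) : ℝ) = (n : ℝ) - 1 := by
          have : (1:ℕ) ≤ n := hn1
          push_cast [this]
          ring
        rw [this]
        ring
      have h7 : Real.exp (-(2 * σ)) ^ (n - 1) ≤ Real.exp (-2) ^ (n - 1) := by
        apply pow_le_pow_left₀ (Real.exp_pos _).le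
        exact Real.exp_le_exp.mpr (by linarith)
      calc Real.exp (-‖y‖) ≤ Real.exp (‖x‖ - 2 * (n : ℝ) * σ) := h5
        _ = Real.exp ‖x‖ * Real.exp (-2 * σ) * Real.exp (-(2 * σ)) ^ (n - 1) := h6
        _ ≤ Real.exp ‖x‖ * Real.exp (-2 * σ) * Real.exp (-2) ^ (n - 1) := by
            apply mul_le_mul_of_nonneg_left h7
            positivity
    have hrpow : ‖y‖ ^ ee ≤ σ ^ ee :=
      Real.rpow_le_rpow_of_nonpos hσ0 hny hee0
    calc U y ≤ C₀ * Real.exp (-‖y‖) * ‖y‖ ^ ee := hUby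
      _ ≤ C₀ * (Real.exp ‖x‖ * Real.exp (-2 * σ) * Real.exp (-2) ^ (n - 1)) * σ ^ ee := by
          apply mul_le_mul
          · exact mul_le_mul_of_nonneg_left hexp hC₀.le
          · exact hrpow
          · positivity
          · positivity
      _ = (C₀ * Real.exp ‖x‖ * Real.exp (-2 * σ) * σ ^ ee) * Real.exp (-2) ^ (n - 1) := by
          ring
  -- sum the bounds over any finite set
  have hRHS0 : (0:ℝ) ≤ C₀ * (2 * (1 - Real.exp (-2))⁻¹) * Real.exp (-2 * σ)
      * σ ^ ee * Real.exp ‖x‖ := by positivity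
  refine tsum_le_of_sum_le' hRHS0 ?_
  intro s
  have hK0 : (0:ℝ) ≤ C₀ * Real.exp ‖x‖ * Real.exp (-2 * σ) * σ ^ ee := by positivity
  calc ∑ j ∈ s, U (x - (2 * ((j : ℤ) : ℝ) * σ) • e1 N)
      ≤ ∑ j ∈ s, (C₀ * Real.exp ‖x‖ * Real.exp (-2 * σ) * σ ^ ee)
          * Real.exp (-2) ^ (j.1.natAbs - 1) :=
        Finset.sum_le_sum (fun j _ => hterm j)
    _ = (C₀ * Real.exp ‖x‖ * Real.exp (-2 * σ) * σ ^ ee)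
          * ∑ j ∈ s, Real.exp (-2) ^ (j.1.natAbs - 1) := by
        rw [Finset.mul_sum]
    _ ≤ (C₀ * Real.exp ‖x‖ * Real.exp (-2 * σ) * σ ^ ee)
          * (2 * (1 - Real.exp (-2))⁻¹) :=
        mul_le_mul_of_nonneg_left (aux_geom_sum s) hK0
    _ = C₀ * (2 * (1 - Real.exp (-2))⁻¹) * Real.exp (-2 * σ) * σ ^ ee * Real.exp ‖x‖ := by
        ring
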